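/- Let n ≥ 1, 1 ≤ k ≤ 2n−2, and let ξ* = (1,0,…,0) ∈ ℝ^{4n} (so that (ξ*_{AA'}) has first two rows equal to the 2×2 identity and all other rows zero). Then the kernel of the Baston symbol Δ_k(ξ*) : Λ^k ℂ^{2n} → Λ^{k+2} ℂ^{2n} consists exactly of those alternating ϑ with ϑ(B₁,…,B_k) = 0 for all B₁,…,B_k ∈ {2,…,2n−1}. -/

import Mathlib

noncomputable section

/-- The complex `2n × 2` matrix `(ξ_{AA'})` associated to `ξ ∈ ℝ^{4n}`:
row `2l` is `(ξ_{4l+1} + i ξ_{4l+2}, −ξ_{4l+3} − i ξ_{4l+4})` and row `2l+1` is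
`(ξ_{4l+3} − i ξ_{4l+4}, ξ_{4l+1} − i ξ_{4l+2})` (using 1-based names, 0-based indices). -/
def xiMat (n : ℕ) (ξ : Fin (4 * n) → ℝ) : Matrix (Fin (2 * n)) (Fin 2) ℂ :=
  Matrix.of fun A A' =>
    if A.val % 2 = 0 then
      (if A'.val = 0 then
        (⟨ξ ⟨4 * (A.val / 2), by have := A.isLt; omega⟩,
          ξ ⟨4 * (A.val / 2) + 1, by have := A.isLt; omega⟩⟩ : ℂ)
      else
        (⟨-ξ ⟨4 * (A.val / 2) + 2, by have := A.isLt; omega⟩,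
          -ξ ⟨4 * (A.val / 2) + 3, by have := A.isLt; omega⟩⟩ : ℂ))
    else
      (if A'.val = 0 then
        (⟨ξ ⟨4 * (A.val / 2) + 2, by have := A.isLt; omega⟩,
          -ξ ⟨4 * (A.val / 2) + 3, by have := A.isLt; omega⟩⟩ : ℂ)
      else
        (⟨ξ ⟨4 * (A.val / 2), by have := A.isLt; omega⟩,
          -ξ ⟨4 * (A.val / 2) + 1, by have := A.isLt; omega⟩⟩ : ℂ))

/-- The raised epsilon symbol on primed indices: `ε^{01} = −1`, `ε^{10} = 1`. -/
def epsUp (a b : Fin 2) : ℂ :=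
  if a.val = 0 ∧ b.val = 1 then -1 else if a.val = 1 ∧ b.val = 0 then 1 else 0

/-- `ξ_A{}^{A'} = ∑_{B'} ξ_{AB'} ε^{B'A'}`. -/
def xiUp (n : ℕ) (ξ : Fin (4 * n) → ℝ) (A : Fin (2 * n)) (A' : Fin 2) : ℂ :=
  ∑ B' : Fin 2, xiMat n ξ A B' * epsUp B' A'

/-- Membership in `Λ^q ℂ^{2n} ⊗ ⊙^p ℂ²`: totally antisymmetric in the `q` unprimed
arguments and totally symmetric in the `p` primed arguments. -/
def IsAltSym (n q p : ℕ) (ϑ : (Fin q → Fin (2 * n)) → (Fin p → Fin 2) → ℂ) : Prop :=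
  (∀ (σ : Equiv.Perm (Fin q)) (a : Fin q → Fin (2 * n)) (b : Fin p → Fin 2),
      ϑ (a ∘ σ) b = ((Equiv.Perm.sign σ : ℤ) : ℂ) * ϑ a b) ∧
  (∀ (σ : Equiv.Perm (Fin p)) (a : Fin q → Fin (2 * n)) (b : Fin p → Fin 2),
      ϑ a (b ∘ σ) = ϑ a b)

/-- The first-order symbol map
`σ_j^{(p+1)}(ξ) : Λ^j ℂ^{2n} ⊗ ⊙^{p+1} ℂ² → Λ^{j+1} ℂ^{2n} ⊗ ⊙^{p} ℂ²`,
`(σϑ)(A₀,…,A_j; B) = (1/(j+1)) ∑_s (−1)^s ∑_{a} ξ_{A_s}{}^{a} ϑ(A₀,…,Â_s,…,A_j; a, B)`. -/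
def symb (n j p : ℕ) (ξ : Fin (4 * n) → ℝ)
    (ϑ : (Fin j → Fin (2 * n)) → (Fin (p + 1) → Fin 2) → ℂ) :
    (Fin (j + 1) → Fin (2 * n)) → (Fin p → Fin 2) → ℂ :=
  fun A B => ((j + 1 : ℕ) : ℂ)⁻¹ * ∑ s : Fin (j + 1), (-1 : ℂ) ^ (s : ℕ) *
    ∑ a : Fin 2, xiUp n ξ (A s) a * ϑ (A ∘ s.succAbove) (Fin.cons a B)

/-- The Baston symbol `Δ_k(ξ) : Λ^k ℂ^{2n} → Λ^{k+2} ℂ^{2n}`: the total antisymmetrization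
(normalized by `1/(k+2)!`) of `(A₁,…,A_{k+2}) ↦ ∑_{a} ξ_{A₁ a} ξ_{A₂}{}^{a} ϑ(A₃,…,A_{k+2})`. -/
def baston (n k : ℕ) (ξ : Fin (4 * n) → ℝ)
    (ϑ : (Fin k → Fin (2 * n)) → (Fin 0 → Fin 2) → ℂ) :
    (Fin (k + 2) → Fin (2 * n)) → (Fin 0 → Fin 2) → ℂ :=
  fun A _ => ((Nat.factorial (k + 2) : ℕ) : ℂ)⁻¹ *
    ∑ σ : Equiv.Perm (Fin (k + 2)), ((Equiv.Perm.sign σ : ℤ) : ℂ) *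
      ∑ a : Fin 2, xiMat n ξ (A (σ 0)) a * xiUp n ξ (A (σ 1)) a *
        ϑ (fun t => A (σ t.succ.succ)) (fun i => i.elim0)

def Mval (n : ℕ) (x y : Fin (2 * n)) : ℂ :=
  if x.val = 0 ∧ y.val = 1 then 1 else if x.val = 1 ∧ y.val = 0 then -1 else 0

lemma xiMat_star (n : ℕ) (A : Fin (2*n)) (A' : Fin 2) :
    xiMat n (fun i => if i.val = 0 then 1 else 0) A A' =
    if (A.val = 0 ∧ A'.val = 0) ∨ (A.val = 1 ∧ A'.val = 1) then 1 else 0 := by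
  unfold xiMat
  have hA : A.val % 2 = 0 ∧ A.val / 2 = 0 ∧ A.val = 0 ∨
      A.val % 2 = 1 ∧ A.val / 2 = 0 ∧ A.val = 1 ∨
      A.val % 2 = 0 ∧ 1 ≤ A.val / 2 ∧ 2 ≤ A.val ∨
      A.val % 2 = 1 ∧ 1 ≤ A.val / 2 ∧ 2 ≤ A.val := by omega
  fin_cases A' <;>
    rcases hA with ⟨h1, h2, h3⟩ | ⟨h1, h2, h3⟩ | ⟨h1, h2, h3⟩ | ⟨h1, h2, h3⟩ <;>
      simp [Matrix.of_apply, h1, h2, h3, Complex.ext_iff] <;> split_ifs <;> simp_all <;> omega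

lemma pair_sum (n : ℕ) (x y : Fin (2*n)) :
    ∑ a : Fin 2, xiMat n (fun i => if i.val = 0 then 1 else 0) x a *
      xiUp n (fun i => if i.val = 0 then 1 else 0) y a = Mval n x y := by
  simp only [xiUp, Fin.sum_univ_two, xiMat_star, epsUp, Mval]
  norm_num
  split_ifs <;> simp_all

def Gsum (n k : ℕ) (ϑ : (Fin k → Fin (2 * n)) → (Fin 0 → Fin 2) → ℂ)
    (A : Fin (k + 2) → Fin (2 * n)) : ℂ :=
  ∑ σ : Equiv.Perm (Fin (k + 2)), ((Equiv.Perm.sign σ : ℤ) : ℂ) *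
    Mval n (A (σ 0)) (A (σ 1)) * ϑ (fun t => A (σ t.succ.succ)) (fun i => i.elim0)

lemma baston_star_eq (n k : ℕ) (ϑ : (Fin k → Fin (2 * n)) → (Fin 0 → Fin 2) → ℂ)
    (A : Fin (k + 2) → Fin (2 * n)) (b : Fin 0 → Fin 2) :
    baston n k (fun i => if i.val = 0 then 1 else 0) ϑ A b =
      ((Nat.factorial (k + 2) : ℕ) : ℂ)⁻¹ * Gsum n k ϑ A := by
  unfold baston Gsum
  congr 1
  refine Finset.sum_congr rfl fun σ _ => ?_
  rw [← Finset.sum_mul, pair_sum, mul_assoc]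

lemma sign_sq (m : ℕ) (π : Equiv.Perm (Fin m)) :
    ((Equiv.Perm.sign π : ℤ) : ℂ) * ((Equiv.Perm.sign π : ℤ) : ℂ) = 1 := by
  rw [← Int.cast_mul, ← Units.val_mul, Int.units_mul_self, Units.val_one, Int.cast_one]

lemma aux_alg (s t m c : ℂ) (h : s * s = 1) : t * m * c = s * (s * t * m * c) := by
  calc t * m * c = (s * s) * (t * m * c) := by rw [h]; ring
  _ = s * (s * t * m * c) := by ring

lemma Gsum_perm (n k : ℕ) (ϑ : (Fin k → Fin (2 * n)) → (Fin 0 → Fin 2) → ℂ)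
    (A : Fin (k + 2) → Fin (2 * n)) (π : Equiv.Perm (Fin (k + 2))) :
    Gsum n k ϑ (A ∘ π) = ((Equiv.Perm.sign π : ℤ) : ℂ) * Gsum n k ϑ A := by
  have key : ∀ σ : Equiv.Perm (Fin (k + 2)),
      ((Equiv.Perm.sign σ : ℤ) : ℂ) * Mval n ((A ∘ π) (σ 0)) ((A ∘ π) (σ 1)) *
        ϑ (fun t => (A ∘ π) (σ t.succ.succ)) (fun i => i.elim0)
      = ((Equiv.Perm.sign π : ℤ) : ℂ) *
        (((Equiv.Perm.sign (π * σ) : ℤ) : ℂ) * Mval n (A ((π * σ) 0)) (A ((π * σ) 1)) *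
          ϑ (fun t => A ((π * σ) t.succ.succ)) (fun i => i.elim0)) := by
    intro σ
    have hs : ((Equiv.Perm.sign (π * σ) : ℤ) : ℂ) =
        ((Equiv.Perm.sign π : ℤ) : ℂ) * ((Equiv.Perm.sign σ : ℤ) : ℂ) := by
      rw [map_mul]; push_cast; ring
    simp only [Function.comp, Equiv.Perm.mul_apply]
    rw [hs]
    exact aux_alg _ _ _ _ (sign_sq _ π)
  unfold Gsum
  rw [Finset.sum_congr rfl fun σ _ => key σ, ← Finset.mul_sum]
  congr 1
  exact Fintype.sum_equiv (Equiv.mulLeft π)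
    (fun σ => ((Equiv.Perm.sign (π * σ) : ℤ) : ℂ) * Mval n (A ((π * σ) 0)) (A ((π * σ) 1)) *
      ϑ (fun t => A ((π * σ) t.succ.succ)) (fun i => i.elim0))
    (fun τ => ((Equiv.Perm.sign τ : ℤ) : ℂ) * Mval n (A (τ 0)) (A (τ 1)) *
      ϑ (fun t => A (τ t.succ.succ)) (fun i => i.elim0))
    (fun σ => rfl)

lemma Gsum_repeat (n k : ℕ) (ϑ : (Fin k → Fin (2 * n)) → (Fin 0 → Fin 2) → ℂ)
    (A : Fin (k + 2) → Fin (2 * n)) (p q : Fin (k + 2)) (hpq : p ≠ q) (hval : A p = A q) :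
    Gsum n k ϑ A = 0 := by
  have hcomp : A ∘ (Equiv.swap p q) = A := by
    funext x
    rcases eq_or_ne x p with rfl | hxp
    · simp [Equiv.swap_apply_left, hval]
    rcases eq_or_ne x q with rfl | hxq
    · simp [Equiv.swap_apply_right, hval]
    · simp [Equiv.swap_apply_of_ne_of_ne hxp hxq]
  have h := Gsum_perm n k ϑ A (Equiv.swap p q)
  rw [hcomp, Equiv.Perm.sign_swap hpq] at h
  simp only [Units.val_neg, Units.val_one, Int.cast_neg, Int.cast_one, neg_mul, one_mul] at h
  linear_combination h / 2

lemma theta_repeat (n k : ℕ) (ϑ : (Fin k → Fin (2 * n)) → (Fin 0 → Fin 2) → ℂ)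
    (hϑ : IsAltSym n k 0 ϑ) (B : Fin k → Fin (2 * n)) (b : Fin 0 → Fin 2)
    (p q : Fin k) (hpq : p ≠ q) (hval : B p = B q) : ϑ B b = 0 := by
  have hcomp : B ∘ (Equiv.swap p q) = B := by
    funext x
    rcases eq_or_ne x p with rfl | hxp
    · simp [Equiv.swap_apply_left, hval]
    rcases eq_or_ne x q with rfl | hxq
    · simp [Equiv.swap_apply_right, hval]
    · simp [Equiv.swap_apply_of_ne_of_ne hxp hxq]
  have h := hϑ.1 (Equiv.swap p q) B b
  rw [hcomp, Equiv.Perm.sign_swap hpq] at h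
  simp only [Units.val_neg, Units.val_one, Int.cast_neg, Int.cast_one, neg_mul, one_mul] at h
  linear_combination h / 2
lemma Gsum_zero (n k : ℕ) (ϑ : (Fin k → Fin (2 * n)) → (Fin 0 → Fin 2) → ℂ)
    (hϑ : IsAltSym n k 0 ϑ)
    (hvan : ∀ B : Fin k → Fin (2 * n), (∀ t, 2 ≤ (B t).val) → ϑ B (fun i => i.elim0) = 0)
    (A : Fin (k + 2) → Fin (2 * n)) : Gsum n k ϑ A = 0 := by
  by_cases hinj : Function.Injective A
  · refine Finset.sum_eq_zero fun σ _ => ?_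
    by_cases h01 : ((A (σ 0)).val = 0 ∧ (A (σ 1)).val = 1) ∨
        ((A (σ 0)).val = 1 ∧ (A (σ 1)).val = 0)
    · have hϑ0 : ϑ (fun t => A (σ t.succ.succ)) (fun i => i.elim0) = 0 := by
        apply hvan
        intro t
        have ht0 : σ t.succ.succ ≠ σ 0 := fun h => Fin.succ_ne_zero t.succ (σ.injective h)
        have ht1 : σ t.succ.succ ≠ σ 1 := by
          intro h
          have h2 := congrArg Fin.val (σ.injective h)
          simp [Fin.val_succ] at h2
        have hv0 : (A (σ t.succ.succ)).val ≠ (A (σ 0)).val :=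
          fun h => ht0 (hinj (Fin.ext h))
        have hv1 : (A (σ t.succ.succ)).val ≠ (A (σ 1)).val :=
          fun h => ht1 (hinj (Fin.ext h))
        rcases h01 with ⟨ha, hb⟩ | ⟨ha, hb⟩ <;> omega
      rw [hϑ0, mul_zero]
    · have hM : Mval n (A (σ 0)) (A (σ 1)) = 0 := by
        simp only [Mval]
        rw [if_neg, if_neg] <;> tauto
      rw [hM, mul_zero, zero_mul]
  · rw [Function.not_injective_iff] at hinj
    obtain ⟨p, q, hval, hpq⟩ := hinj
    exact Gsum_repeat n k ϑ A p q hpq hval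
lemma ite_or_split {m : ℕ} (K : ℂ) (p : Fin (m + 2)) :
    (if (p : ℕ) = 0 ∨ (p : ℕ) = 1 then K else 0) =
    (if p = 0 then K else 0) + (if p = 1 then K else 0) := by
  have h0v : ((0 : Fin (m + 2)) : ℕ) = 0 := rfl
  have h1v : ((1 : Fin (m + 2)) : ℕ) = 1 := Fin.val_one m
  simp only [Fin.ext_iff, h0v, h1v]
  rcases Nat.lt_trichotomy (p : ℕ) 1 with h | h | h
  · have h0 : (p : ℕ) = 0 := by omega
    simp [h0]
  · simp [h]
  · have a : (p : ℕ) ≠ 0 := by omega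
    have b : (p : ℕ) ≠ 1 := by omega
    simp [a, b]

lemma Gsum_eval (n k : ℕ) (hn : 1 ≤ n) (hk2 : k + 2 ≤ 2 * n)
    (ϑ : (Fin k → Fin (2 * n)) → (Fin 0 → Fin 2) → ℂ) (hϑ : IsAltSym n k 0 ϑ)
    (B : Fin k → Fin (2 * n)) (hB2 : ∀ t, 2 ≤ (B t).val) (hBinj : Function.Injective B)
    (A : Fin (k + 2) → Fin (2 * n))
    (hA0 : (A 0).val = 0) (hA1 : (A 1).val = 1) (hAs : ∀ j : Fin k, A j.succ.succ = B j)
    (hAinj : Function.Injective A) :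
    Gsum n k ϑ A = 2 * (Nat.factorial k : ℂ) * ϑ B (fun i => i.elim0) := by
  classical
  set c := ϑ B (fun i => i.elim0) with hc
  set g : Equiv.Perm (Fin (k + 2)) → ℂ := fun σ =>
    ((Equiv.Perm.sign σ : ℤ) : ℂ) * Mval n (A (σ 0)) (A (σ 1)) *
      ϑ (fun t => A (σ t.succ.succ)) (fun i => i.elim0) with hg
  -- the key pointwise computation
  have key : ∀ (p : Fin (k + 2)) (q : Fin (k + 1)) (ρ : Equiv.Perm (Fin k)),
      g (Equiv.Perm.decomposeFin.symm (p, Equiv.Perm.decomposeFin.symm (q, ρ))) =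
        if q = 0 ∧ ((p : ℕ) = 0 ∨ (p : ℕ) = 1) then c else 0 := by
    intro p q ρ
    set e : Equiv.Perm (Fin (k + 1)) := Equiv.Perm.decomposeFin.symm (q, ρ) with he
    set σ : Equiv.Perm (Fin (k + 2)) := Equiv.Perm.decomposeFin.symm (p, e) with hσ
    have hσ0 : σ 0 = p := Equiv.Perm.decomposeFin_symm_apply_zero p e
    have hσ1 : σ 1 = Equiv.swap 0 p q.succ := by
      rw [hσ, Equiv.Perm.decomposeFin_symm_apply_one, he,
        Equiv.Perm.decomposeFin_symm_apply_zero]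
    have hσs : ∀ t : Fin k, σ t.succ.succ =
        Equiv.swap 0 p ((Equiv.swap 0 q (ρ t).succ).succ) := by
      intro t
      rw [hσ, show (t.succ.succ : Fin (k + 2)) = (t.succ).succ from rfl,
        Equiv.Perm.decomposeFin_symm_apply_succ, he,
        Equiv.Perm.decomposeFin_symm_apply_succ]
    have hsigne : Equiv.Perm.sign e = (if q = 0 then 1 else -1) * Equiv.Perm.sign ρ :=
      Equiv.Perm.decomposeFin.symm_sign q ρ
    have hsignσ : Equiv.Perm.sign σ = (if p = 0 then 1 else -1) * Equiv.Perm.sign e :=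
      Equiv.Perm.decomposeFin.symm_sign p e
    by_cases hq : q = 0
    · subst hq
      by_cases hp0 : p = 0
      · subst hp0
        have h1 : σ 1 = 1 := by
          rw [hσ1, Equiv.swap_self]; simp [Fin.succ_zero_eq_one]
        have hs : ∀ t : Fin k, σ t.succ.succ = (ρ t).succ.succ := by
          intro t; rw [hσs t, Equiv.swap_self, Equiv.swap_self]; simp
        have hM : Mval n (A (σ 0)) (A (σ 1)) = 1 := by
          rw [hσ0, h1]; simp [Mval, hA0, hA1]
        have hθ : ϑ (fun t => A (σ t.succ.succ)) (fun i => i.elim0) =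
            ((Equiv.Perm.sign ρ : ℤ) : ℂ) * c := by
          have harg : (fun t => A (σ t.succ.succ)) = B ∘ ρ := by
            funext t; rw [hs t, hAs (ρ t)]; rfl
          rw [harg, hϑ.1 ρ B]
        have hsg : ((Equiv.Perm.sign σ : ℤ) : ℂ) = ((Equiv.Perm.sign ρ : ℤ) : ℂ) := by
          rw [hsignσ, hsigne]; simp
        rw [hg]
        simp only [hM, hθ, hsg, mul_one]
        rw [if_pos (by simp)]
        calc ((Equiv.Perm.sign ρ : ℤ) : ℂ) * (((Equiv.Perm.sign ρ : ℤ) : ℂ) * c)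
            = (((Equiv.Perm.sign ρ : ℤ) : ℂ) * ((Equiv.Perm.sign ρ : ℤ) : ℂ)) * c := by ring
          _ = c := by rw [sign_sq]; ring
      · by_cases hp1 : (p : ℕ) = 1
        · have hp1' : p = 1 := by
            apply Fin.ext; rw [hp1, Fin.val_one]
          subst hp1'
          have h1 : σ 1 = 0 := by
            rw [hσ1, Fin.succ_zero_eq_one, Equiv.swap_apply_right]
          have hs : ∀ t : Fin k, σ t.succ.succ = (ρ t).succ.succ := by
            intro t
            rw [hσs t, Equiv.swap_self]
            simp only [Equiv.refl_apply]
            apply Equiv.swap_apply_of_ne_of_ne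
            · exact Fin.succ_ne_zero _
            · intro h
              have h2 := congrArg Fin.val h
              simp [Fin.val_succ] at h2
          have hM : Mval n (A (σ 0)) (A (σ 1)) = -1 := by
            rw [hσ0, h1]; simp [Mval, hA0, hA1]
          have hθ : ϑ (fun t => A (σ t.succ.succ)) (fun i => i.elim0) =
              ((Equiv.Perm.sign ρ : ℤ) : ℂ) * c := by
            have harg : (fun t => A (σ t.succ.succ)) = B ∘ ρ := by
              funext t; rw [hs t, hAs (ρ t)]; rfl
            rw [harg, hϑ.1 ρ B]
          have hsg : ((Equiv.Perm.sign σ : ℤ) : ℂ) = -((Equiv.Perm.sign ρ : ℤ) : ℂ) := by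
            rw [hsignσ, hsigne, if_neg hp0, if_pos rfl]; push_cast; ring
          rw [hg]
          simp only [hM, hθ, hsg]
          rw [if_pos (by simp [Fin.val_one])]
          calc -((Equiv.Perm.sign ρ : ℤ) : ℂ) * (-1) * (((Equiv.Perm.sign ρ : ℤ) : ℂ) * c)
              = (((Equiv.Perm.sign ρ : ℤ) : ℂ) * ((Equiv.Perm.sign ρ : ℤ) : ℂ)) * c := by ring
            _ = c := by rw [sign_sq]; ring
        · -- p not 0 or 1 : Mval vanishes
          have hp0v : (p : ℕ) ≠ 0 := fun h => hp0 (Fin.ext h)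
          have hM : Mval n (A (σ 0)) (A (σ 1)) = 0 := by
            have hA0p : (A (σ 0)).val ≠ 0 := by
              rw [hσ0]
              intro h
              exact hp0v (congrArg Fin.val (hAinj (Fin.ext (h.trans hA0.symm))))
            have hA1p : (A (σ 0)).val ≠ 1 := by
              rw [hσ0]
              intro h
              have := hAinj (Fin.ext (h.trans hA1.symm))
              rw [this] at hp1
              exact hp1 (Fin.val_one k)
            simp only [Mval]
            rw [if_neg, if_neg] <;> tauto
          rw [hg]
          simp only [hM, mul_zero, zero_mul]
          rw [if_neg (by tauto)]
    · -- q ≠ 0 : Mval vanishes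
      have hM : Mval n (A (σ 0)) (A (σ 1)) = 0 := by
        rcases Nat.lt_or_ge 2 2 with _ | _
        · omega
        simp only [Mval]
        rw [if_neg, if_neg]
        · rintro ⟨h1, h0⟩
          -- A (σ 0) val = 1 → σ 0 = 1 → p = 1 ; A (σ 1) val = 0 → σ 1 = 0
          have hσ1eq : σ 1 = 0 := hAinj (Fin.ext (h0.trans hA0.symm))
          have hpeq : p = 1 := by rw [← hσ0]; exact hAinj (Fin.ext (h1.trans hA1.symm))
          rw [hσ1, hpeq] at hσ1eq
          have : q.succ = Equiv.swap (0 : Fin (k+2)) 1 0 := by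
            have := congrArg (Equiv.swap (0 : Fin (k+2)) 1) hσ1eq
            rwa [Equiv.swap_apply_self] at this
          rw [Equiv.swap_apply_left] at this
          have hq0 : q = 0 := by
            apply Fin.succ_injective
            rw [this, Fin.succ_zero_eq_one]
          exact hq hq0
        · rintro ⟨h0, h1⟩
          have hpeq : p = 0 := by rw [← hσ0]; exact hAinj (Fin.ext (h0.trans hA0.symm))
          have hσ1eq : σ 1 = 1 := hAinj (Fin.ext (h1.trans hA1.symm))
          rw [hσ1, hpeq, Equiv.swap_self] at hσ1eq
          simp only [Equiv.refl_apply] at hσ1eq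
          have hq0 : q = 0 := by
            apply Fin.succ_injective
            rw [hσ1eq, Fin.succ_zero_eq_one]
          exact hq hq0
      rw [hg]
      simp only [hM, mul_zero, zero_mul]
      rw [if_neg (by tauto)]
  -- now sum up
  have hGsum : Gsum n k ϑ A = ∑ p : Fin (k + 2), ∑ q : Fin (k + 1), ∑ ρ : Equiv.Perm (Fin k),
      g (Equiv.Perm.decomposeFin.symm (p, Equiv.Perm.decomposeFin.symm (q, ρ))) := by
    calc Gsum n k ϑ A = ∑ σ : Equiv.Perm (Fin (k + 2)), g σ := rfl
      _ = ∑ x : Fin (k + 2) × Equiv.Perm (Fin (k + 1)), g (Equiv.Perm.decomposeFin.symm x) :=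
          (Equiv.sum_comp Equiv.Perm.decomposeFin.symm g).symm
      _ = ∑ p : Fin (k + 2), ∑ e : Equiv.Perm (Fin (k + 1)),
            g (Equiv.Perm.decomposeFin.symm (p, e)) := Fintype.sum_prod_type _
      _ = ∑ p : Fin (k + 2), ∑ y : Fin (k + 1) × Equiv.Perm (Fin k),
            g (Equiv.Perm.decomposeFin.symm (p, Equiv.Perm.decomposeFin.symm y)) :=
          Finset.sum_congr rfl fun p _ =>
            (Equiv.sum_comp Equiv.Perm.decomposeFin.symm
              (fun e => g (Equiv.Perm.decomposeFin.symm (p, e)))).symm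
      _ = ∑ p : Fin (k + 2), ∑ q : Fin (k + 1), ∑ ρ : Equiv.Perm (Fin k),
            g (Equiv.Perm.decomposeFin.symm (p, Equiv.Perm.decomposeFin.symm (q, ρ))) :=
          Finset.sum_congr rfl fun p _ => Fintype.sum_prod_type _
  rw [hGsum]
  have inner : ∀ p : Fin (k + 2),
      (∑ q : Fin (k + 1), ∑ ρ : Equiv.Perm (Fin k),
        g (Equiv.Perm.decomposeFin.symm (p, Equiv.Perm.decomposeFin.symm (q, ρ)))) =
      if (p : ℕ) = 0 ∨ (p : ℕ) = 1 then (Nat.factorial k : ℂ) * c else 0 := by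
    intro p
    have hq : ∀ q : Fin (k + 1), (∑ ρ : Equiv.Perm (Fin k),
        g (Equiv.Perm.decomposeFin.symm (p, Equiv.Perm.decomposeFin.symm (q, ρ)))) =
        if q = 0 ∧ ((p : ℕ) = 0 ∨ (p : ℕ) = 1) then (Nat.factorial k : ℂ) * c else 0 := by
      intro q
      rw [Finset.sum_congr rfl fun ρ _ => key p q ρ]
      by_cases hcond : q = 0 ∧ ((p : ℕ) = 0 ∨ (p : ℕ) = 1)
      · rw [if_pos hcond]
        simp only [if_pos hcond, Finset.sum_const, Finset.card_univ, Fintype.card_perm,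
          Fintype.card_fin, nsmul_eq_mul]
      · rw [if_neg hcond]
        simp only [if_neg hcond, Finset.sum_const_zero]
    rw [Finset.sum_congr rfl fun q _ => hq q]
    by_cases hP : (p : ℕ) = 0 ∨ (p : ℕ) = 1
    · simp only [hP, and_true, if_pos hP]
      rw [Finset.sum_ite_eq' Finset.univ (0 : Fin (k + 1))
        (fun _ => (Nat.factorial k : ℂ) * c)]
      simp
    · rw [if_neg hP]; exact Finset.sum_eq_zero fun q _ => if_neg (fun h => hP h.2)
  rw [Finset.sum_congr rfl fun p _ => inner p]
  rw [Finset.sum_congr rfl fun p _ => ite_or_split ((Nat.factorial k : ℂ) * c) p, Finset.sum_add_distrib,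
    Finset.sum_ite_eq' Finset.univ (0 : Fin (k + 2)) (fun _ => (Nat.factorial k : ℂ) * c),
    Finset.sum_ite_eq' Finset.univ (1 : Fin (k + 2)) (fun _ => (Nat.factorial k : ℂ) * c)]
  simp only [Finset.mem_univ, if_pos]
  ring

/-- Description of the kernel of the Baston symbol `Δ_k(ξ*)` for `ξ* = (1,0,…,0)` and
`1 ≤ k ≤ 2n−2`: an alternating `ϑ ∈ Λ^k ℂ^{2n}` lies in the kernel iff
`ϑ(B₁,…,B_k) = 0` whenever all `B₁,…,B_k ≥ 2`. -/
theorem baston_kernel_at_basepoint (n k : ℕ) (hn : 1 ≤ n) (hk1 : 1 ≤ k)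
    (hk2 : k + 2 ≤ 2 * n)
    (ϑ : (Fin k → Fin (2 * n)) → (Fin 0 → Fin 2) → ℂ)
    (hϑ : IsAltSym n k 0 ϑ) :
    baston n k (fun i => if i.val = 0 then 1 else 0) ϑ = 0 ↔
      ∀ B : Fin k → Fin (2 * n), (∀ t, 2 ≤ (B t).val) →
        ϑ B (fun i => i.elim0) = 0 := by
  constructor
  · intro h B hB2
    by_cases hBinj : Function.Injective B
    · -- build the extended tuple A
      set A : Fin (k + 2) → Fin (2 * n) := fun i =>
        if h : (i : ℕ) < 2 then ⟨(i : ℕ), by omega⟩ else B ⟨(i : ℕ) - 2, by omega⟩ with hA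
      have hv : ∀ x : Fin (k + 2), (A x).val =
          if h : (x : ℕ) < 2 then (x : ℕ) else (B ⟨(x : ℕ) - 2, by omega⟩).val := by
        intro x
        by_cases hx : (x : ℕ) < 2 <;> simp only [hA, hx, dite_true, dite_false, Fin.val_mk]
      have hA0 : (A 0).val = 0 := by rw [hv]; simp
      have hA1 : (A 1).val = 1 := by rw [hv]; simp [Fin.val_one]
      have hAs' : ∀ x : Fin (k + 2), ∀ hx : ¬((x : ℕ) < 2),
          A x = B ⟨(x : ℕ) - 2, by omega⟩ := by
        intro x hx
        simp only [hA]
        rw [dif_neg hx]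
      have hAs : ∀ j : Fin k, A j.succ.succ = B j := by
        intro j
        have hval : ((j.succ.succ : Fin (k + 2)) : ℕ) = (j : ℕ) + 2 := by
          simp [Fin.val_succ]
        rw [hAs' j.succ.succ (by omega)]
        exact congrArg B (Fin.ext (show ((j.succ.succ : Fin (k + 2)) : ℕ) - 2 = (j : ℕ) by omega))
      have hAinj : Function.Injective A := by
        intro i j hij
        by_cases hi : (i : ℕ) < 2 <;> by_cases hj : (j : ℕ) < 2
        · have hval : (A i).val = (A j).val := by rw [hij]
          rw [hv i, hv j, dif_pos hi, dif_pos hj] at hval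
          exact Fin.ext hval
        · exfalso
          have h1 : (A i).val = (i : ℕ) := by rw [hv i, dif_pos hi]
          have h2 : 2 ≤ (A j).val := by
            rw [hAs' j hj]; exact hB2 _
          rw [← hij] at h2
          omega
        · exfalso
          have h1 : (A j).val = (j : ℕ) := by rw [hv j, dif_pos hj]
          have h2 : 2 ≤ (A i).val := by
            rw [hAs' i hi]; exact hB2 _
          rw [hij] at h2
          omega
        · rw [hAs' i hi, hAs' j hj] at hij
          have h2 := congrArg Fin.val (hBinj hij)
          simp only at h2
          exact Fin.ext (by omega)
      have hA' : baston n k (fun i => if i.val = 0 then 1 else 0) ϑ A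
          (fun i => i.elim0) = 0 := by rw [h]; rfl
      rw [baston_star_eq, Gsum_eval n k hn hk2 ϑ hϑ B hB2 hBinj A hA0 hA1 hAs hAinj] at hA'
      have hfac : ((Nat.factorial (k + 2) : ℕ) : ℂ) ≠ 0 :=
        Nat.cast_ne_zero.mpr (Nat.factorial_ne_zero _)
      have hfac2 : ((Nat.factorial k : ℕ) : ℂ) ≠ 0 :=
        Nat.cast_ne_zero.mpr (Nat.factorial_ne_zero _)
      have h2 : (2 : ℂ) ≠ 0 := two_ne_zero
      rcases mul_eq_zero.mp hA' with hz | hz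
      · exact absurd hz (inv_ne_zero hfac)
      rcases mul_eq_zero.mp hz with hz' | hz'
      · rcases mul_eq_zero.mp hz' with hz'' | hz''
        · exact absurd hz'' h2
        · exact absurd hz'' hfac2
      · exact hz'
    · rw [Function.not_injective_iff] at hBinj
      obtain ⟨p, q, hval, hpq⟩ := hBinj
      exact theta_repeat n k ϑ hϑ B _ p q hpq hval
  · intro hvan
    funext A b
    rw [baston_star_eq, Gsum_zero n k ϑ hϑ hvan A, mul_zero]
    rfl
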